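/- Let A ∈ ℝ^{m×n}, and let P, Q be the polyhedral cones generated by the matrices G ∈ ℝ^{m×p} and H ∈ ℝ^{n×q} with unit-norm columns. If every entry of Gᵀ A H is nonnegative, then the optimal value of SV(A,P,Q) equals the minimum entry of Gᵀ A H, i.e. min{⟨u,Av⟩ : u ∈ P, ‖u‖ = 1, v ∈ Q, ‖v‖ = 1} = min_{i,j} ⟨g_i, A h_j⟩, and this minimum is attained at a pair (g_i, h_j) of generator columns of G and H. -/

import Mathlib

open Matrix

/-- Euclidean norm of a vector in `ℝ^n`. -/
noncomputable def vnorm {n : ℕ} (v : Fin n → ℝ) : ℝ := Real.sqrt (v ⬝ᵥ v)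

/-- The polyhedral cone generated by the columns of `G`. -/
def coneOf {m p : ℕ} (G : Matrix (Fin m) (Fin p) ℝ) : Set (Fin m → ℝ) :=
  {u | ∃ x : Fin p → ℝ, (∀ i, 0 ≤ x i) ∧ u = G.mulVec x}

/-- `(u,v)` is an optimal solution of the problem `SV(A,P,Q)`:
minimize `⟨u, Av⟩` over unit vectors `u ∈ P`, `v ∈ Q`. -/
def IsOptSV {m n : ℕ} (A : Matrix (Fin m) (Fin n) ℝ) (P : Set (Fin m → ℝ))
    (Q : Set (Fin n → ℝ)) (u : Fin m → ℝ) (v : Fin n → ℝ) : Prop :=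
  u ∈ P ∧ vnorm u = 1 ∧ v ∈ Q ∧ vnorm v = 1 ∧
    ∀ u' ∈ P, ∀ v' ∈ Q, vnorm u' = 1 → vnorm v' = 1 →
      u ⬝ᵥ A.mulVec v ≤ u' ⬝ᵥ A.mulVec v'

lemma vnorm_eq {m : ℕ} (v : Fin m → ℝ) :
    vnorm v = ‖(WithLp.linearEquiv 2 ℝ (Fin m → ℝ)).symm v‖ := by
  rw [show ((WithLp.linearEquiv 2 ℝ (Fin m → ℝ)).symm v : EuclideanSpace ℝ (Fin m))
    = (WithLp.equiv 2 (Fin m → ℝ)).symm v from rfl, EuclideanSpace.norm_eq]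
  simp [vnorm, dotProduct, sq]

lemma dot_eq {m n p q : ℕ} (A : Matrix (Fin m) (Fin n) ℝ)
    (G : Matrix (Fin m) (Fin p) ℝ) (H : Matrix (Fin n) (Fin q) ℝ)
    (x : Fin p → ℝ) (y : Fin q → ℝ) :
    (G.mulVec x) ⬝ᵥ A.mulVec (H.mulVec y) = x ⬝ᵥ (Gᵀ * A * H).mulVec y := by
  conv_rhs => rw [Matrix.dotProduct_mulVec]
  rw [← Matrix.vecMul_vecMul, ← Matrix.vecMul_vecMul, Matrix.vecMul_transpose,
    ← Matrix.dotProduct_mulVec, ← Matrix.dotProduct_mulVec]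

lemma vnorm_mulVec_le {m p : ℕ} (G : Matrix (Fin m) (Fin p) ℝ)
    (hG : ∀ j, vnorm (fun i => G i j) = 1) (x : Fin p → ℝ) (hx : ∀ i, 0 ≤ x i) :
    vnorm (G.mulVec x) ≤ ∑ i, x i := by
  rw [vnorm_eq]
  have h0 : G.mulVec x = ∑ i, x i • (fun k => G k i) := by
    ext k
    simp [Matrix.mulVec, dotProduct, Finset.sum_apply, mul_comm]
  have h1 : (WithLp.linearEquiv 2 ℝ (Fin m → ℝ)).symm (G.mulVec x)
      = ∑ i, x i • (WithLp.linearEquiv 2 ℝ (Fin m → ℝ)).symm (fun k => G k i) := by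
    rw [h0, map_sum]
    simp
  rw [h1]
  calc ‖∑ i, x i • (WithLp.linearEquiv 2 ℝ (Fin m → ℝ)).symm (fun k => G k i)‖
      ≤ ∑ i, ‖x i • (WithLp.linearEquiv 2 ℝ (Fin m → ℝ)).symm (fun k => G k i)‖ :=
        norm_sum_le _ _
    _ = ∑ i, x i := by
        refine Finset.sum_congr rfl fun i _ => ?_
        rw [norm_smul, ← vnorm_eq, hG i, Real.norm_eq_abs, abs_of_nonneg (hx i), mul_one]

lemma col_eq {m p : ℕ} (G : Matrix (Fin m) (Fin p) ℝ) (i : Fin p) :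
    (fun k => G k i) = G.mulVec (Pi.single i 1) := by
  rw [Matrix.mulVec_single]
  simp
  rfl

lemma col_mem {m p : ℕ} (G : Matrix (Fin m) (Fin p) ℝ) (i : Fin p) :
    (fun k => G k i) ∈ coneOf G :=
  ⟨Pi.single i 1, fun k => by
    classical
    simp only [Pi.single_apply]
    split <;> norm_num, col_eq G i⟩

/-- If every entry of `Gᵀ A H` is nonnegative, then the optimal value of `SV(A,P,Q)` is the
minimum entry of `Gᵀ A H`, attained at a pair of generator columns of `G` and `H`. -/
theorem stmt3 {m n p q : ℕ} (hp : 0 < p) (hq : 0 < q)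
    (A : Matrix (Fin m) (Fin n) ℝ)
    (G : Matrix (Fin m) (Fin p) ℝ) (H : Matrix (Fin n) (Fin q) ℝ)
    (hG : ∀ j, vnorm (fun i => G i j) = 1) (hH : ∀ j, vnorm (fun i => H i j) = 1)
    (hpos : ∀ i j, 0 ≤ (Gᵀ * A * H) i j) :
    ∃ (i : Fin p) (j : Fin q),
      (∀ i' j', (Gᵀ * A * H) i j ≤ (Gᵀ * A * H) i' j') ∧
      (fun k => G k i) ⬝ᵥ A.mulVec (fun k => H k j) = (Gᵀ * A * H) i j ∧
      IsOptSV A (coneOf G) (coneOf H) (fun k => G k i) (fun k => H k j) := by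
  set M := Gᵀ * A * H with hM
  obtain ⟨⟨i, j⟩, -, hmin⟩ := Finset.exists_min_image (Finset.univ ×ˢ Finset.univ)
    (fun ij : Fin p × Fin q => M ij.1 ij.2)
    ⟨(⟨0, hp⟩, ⟨0, hq⟩), by simp⟩
  have hmin' : ∀ i' j', M i j ≤ M i' j' := fun i' j' => hmin (i', j') (by simp)
  have hdot : ∀ (i : Fin p) (j : Fin q),
      (fun k => G k i) ⬝ᵥ A.mulVec (fun k => H k j) = M i j := by
    intro a b
    rw [col_eq G a, col_eq H b, dot_eq, ← hM, Matrix.mulVec_single,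
      single_dotProduct]
    simp
  refine ⟨i, j, hmin', hdot i j, col_mem G i, hG i, col_mem H j, hH j, ?_⟩
  intro u' hu' v' hv' hnu hnv
  obtain ⟨x, hx, rfl⟩ := hu'
  obtain ⟨y, hy, rfl⟩ := hv'
  have hsx : 1 ≤ ∑ a, x a := hnu ▸ vnorm_mulVec_le G hG x hx
  have hsy : 1 ≤ ∑ b, y b := hnv ▸ vnorm_mulVec_le H hH y hy
  rw [hdot i j, dot_eq, ← hM]
  have expand : x ⬝ᵥ M.mulVec y = ∑ a, ∑ b, M i j * (x a * y b)
      + ∑ a, ∑ b, (M a b - M i j) * (x a * y b) := by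
    simp only [dotProduct, Matrix.mulVec, Finset.mul_sum, ← Finset.sum_add_distrib]
    refine Finset.sum_congr rfl fun a _ => Finset.sum_congr rfl fun b _ => ?_
    ring
  have h1 : M i j * 1 ≤ M i j * ((∑ a, x a) * (∑ b, y b)) := by
    have : (1:ℝ) ≤ (∑ a, x a) * (∑ b, y b) := by nlinarith
    exact mul_le_mul_of_nonneg_left this (hpos i j)
  calc M i j = M i j * 1 := by ring
    _ ≤ M i j * ((∑ a, x a) * (∑ b, y b)) := h1
    _ = ∑ a, ∑ b, M i j * (x a * y b) := by
        rw [Finset.sum_mul_sum, Finset.mul_sum]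
        exact Finset.sum_congr rfl fun a _ => by rw [Finset.mul_sum]
    _ ≤ x ⬝ᵥ M.mulVec y := by
        rw [expand]
        refine le_add_of_nonneg_right ?_
        refine Finset.sum_nonneg fun a _ => Finset.sum_nonneg fun b _ => ?_
        exact mul_nonneg (by linarith [hmin' a b]) (mul_nonneg (hx a) (hy b))
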